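/- arXiv:2207.11854 — 4 statements merged into one kernel-verified Lean document; each statement's English description precedes it below -/
import Mathlib

section
/- Let 𝒟 be a preadditive category and let S be a finite set of objects of 𝒟 such that every object of 𝒟 is isomorphic to a finite biproduct of objects belonging to S. Let (H_n)_{n∈ℕ} be an inductive system of additive functors from 𝒟 to the category AddCommGrp of abelian groups, with connecting natural transformations ν_n : H_n ⟶ H_{n+1} whose component (ν_n)_Q : H_n(Q) → H_{n+1}(Q) is injective for every object Q of 𝒟. Let H be the colimit of this system in the functor category, with canonical natural transformations λ_n : H_n ⟶ H. Let E : 𝒟 ⥤ AddCommGrp be an additive functor such that E(Q) is a free abelian group of finite rank for every object Q of 𝒟. Then for every natural transformation α : E ⟶ H there exist m ∈ ℕ and a natural transformation α′ : E ⟶ H_m such that α = λ_m ∘ α′. -/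
open CategoryTheory CategoryTheory.Limits

universe w v u

private lemma AddCommGrp_hom_congr {A B : AddCommGrpCat.{w}} {f g : A ⟶ B} (h : f = g)
    (x : A) : f x = g x := by rw [h]

/-- **Factorization of natural transformations through a finite stage.**
Let `𝒟` be a preadditive category with a finite set `S` of objects such that every object of
`𝒟` is isomorphic to a finite biproduct of objects of `S`.  Let `(H n)` be an ℕ-indexed
inductive system of additive functors `𝒟 ⥤ AddCommGrp` with injective connecting natural
transformations `ν n : H n ⟶ H (n+1)`, and let `c` be a colimit cocone of the associated
diagram `ℕ ⥤ (𝒟 ⥤ AddCommGrp)` (so `c.pt` is the colimit functor `H` and `c.ι.app n` are the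
canonical natural transformations `λ_n`).  If `E : 𝒟 ⥤ AddCommGrp` is an additive functor
with `E.obj Q` a free abelian group of finite rank for every `Q`, then every natural
transformation `α : E ⟶ H` factors as `α = λ_m ∘ α′` for some `m` and some `α′ : E ⟶ H m`. -/
theorem natTrans_to_colimit_factors_through_finite_stage
    {D : Type u} [Category.{v} D] [Preadditive D]
    (S : Set D) (hS : S.Finite)
    (hgen : ∀ Q : D, ∃ (n : ℕ) (g : Fin n → D) (_ : ∀ k, g k ∈ S)
      (hg : HasBiproduct g), Nonempty (Q ≅ @biproduct _ _ _ _ g hg))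
    (H : ℕ → D ⥤ AddCommGrpCat.{w}) [∀ n, (H n).Additive]
    (ν : ∀ n, H n ⟶ H (n + 1))
    (hinj : ∀ (n : ℕ) (Q : D), Function.Injective ((ν n).app Q))
    (c : Cocone (Functor.ofSequence ν)) (hc : IsColimit c)
    (E : D ⥤ AddCommGrpCat.{w}) [E.Additive]
    (hfree : ∀ Q : D, Module.Free ℤ (E.obj Q) ∧ Module.Finite ℤ (E.obj Q))
    (α : E ⟶ c.pt) :
    ∃ (m : ℕ) (α' : E ⟶ H m), α = α' ≫ c.ι.app m := by
  classical
  haveI : PreservesColimitsOfShape ℕ (forget AddCommGrpCat.{w}) :=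
    preservesColimitsOfShape_of_equiv (ULiftHomULiftCategory.equiv.{w} ℕ).symm _
  have hcQ : ∀ Q : D, IsColimit (((evaluation D AddCommGrpCat.{w}).obj Q).mapCocone c) :=
    fun Q => isColimitOfPreserves _ hc
  -- injectivity of the transition maps of the sequence, objectwise
  have hFinj : ∀ (i j : ℕ) (h : i ≤ j) (Q : D),
      Function.Injective (((Functor.ofSequence ν).map (homOfLE h)).app Q) := by
    intro i j h
    induction j, h using Nat.le_induction with
    | base =>
      intro Q
      have : (homOfLE (le_refl i)) = 𝟙 i := rfl
      rw [this, (Functor.ofSequence ν).map_id]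
      exact fun a b hab => hab
    | succ n hn ih =>
      intro Q
      have hsplit : (homOfLE (Nat.le_succ_of_le hn)) =
          homOfLE hn ≫ homOfLE (Nat.le_add_right n 1) := rfl
      rw [hsplit, (Functor.ofSequence ν).map_comp]
      have h2 : (Functor.ofSequence ν).map (homOfLE (Nat.le_add_right n 1)) = ν n :=
        Functor.ofSequence_map_homOfLE_succ ν n
      rw [NatTrans.comp_app, h2]
      intro a b hab
      exact ih Q (hinj n Q (by rw [ConcreteCategory.comp_apply] at hab; exact hab))
  -- injectivity of the canonical maps into the colimit, objectwise
  have hLinj : ∀ (m : ℕ) (Q : D), Function.Injective ((c.ι.app m).app Q) := by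
    intro m Q x y hxy
    obtain ⟨k, f, g, hk⟩ := Concrete.isColimit_exists_of_rep_eq
      ((Functor.ofSequence ν) ⋙ (evaluation D AddCommGrpCat.{w}).obj Q) (hcQ Q) x y hxy
    have hfg : f = g := Subsingleton.elim _ _
    subst hfg
    have hf : f = homOfLE (leOfHom f) := Subsingleton.elim _ _
    rw [hf] at hk
    exact hFinj m k (leOfHom f) Q hk
  -- the range subgroups
  let rng : ℕ → ∀ Q : D, AddSubgroup (c.pt.obj Q) :=
    fun m Q => AddMonoidHom.range ((c.ι.app m).app Q).hom
  have hmono : ∀ (m m' : ℕ) (h : m ≤ m') (Q : D), rng m Q ≤ rng m' Q := by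
    rintro m m' h Q x ⟨y, rfl⟩
    refine ⟨((Functor.ofSequence ν).map (homOfLE h)).app Q y, ?_⟩
    have hw : (Functor.ofSequence ν).map (homOfLE h) ≫ c.ι.app m' = c.ι.app m :=
      c.w (homOfLE h)
    exact AddCommGrp_hom_congr (congrArg (fun t => NatTrans.app t Q) hw) y
  have hmap : ∀ (m : ℕ) {Q Q' : D} (f : Q ⟶ Q') (x : c.pt.obj Q),
      x ∈ rng m Q → (c.pt.map f) x ∈ rng m Q' := by
    rintro m Q Q' f x ⟨y, rfl⟩
    refine ⟨(H m).map f y, ?_⟩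
    exact NatTrans.naturality_apply (c.ι.app m) f y
  -- each object of S admits a stage through which α factors
  have hstage : ∀ Q : D, ∃ m : ℕ, ∀ x : E.obj Q, α.app Q x ∈ rng m Q := by
    intro Q
    obtain ⟨s, hs⟩ := (hfree Q).2.fg_top
    have hrep : ∀ t : E.obj Q, ∃ j : ℕ, α.app Q t ∈ rng j Q := by
      intro t
      obtain ⟨j, y, hy⟩ := Concrete.isColimit_exists_rep
        ((Functor.ofSequence ν) ⋙ (evaluation D AddCommGrpCat.{w}).obj Q) (hcQ Q) (α.app Q t)
      exact ⟨j, y, hy⟩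
    refine ⟨s.sup fun t => (hrep t).choose, fun x => ?_⟩
    set m := s.sup fun t => (hrep t).choose with hm
    have hgen' : ∀ t ∈ s, α.app Q t ∈ rng m Q := fun t ht =>
      hmono _ _ (Finset.le_sup ht) Q (hrep t).choose_spec
    let N : Submodule ℤ (E.obj Q) :=
      AddSubgroup.toIntSubmodule (AddSubgroup.comap (α.app Q).hom (rng m Q))
    have hsub : Submodule.span ℤ (s : Set (E.obj Q)) ≤ N :=
      Submodule.span_le.mpr fun t ht => hgen' t ht
    have : x ∈ N := hsub (hs ▸ Submodule.mem_top)
    exact this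
  choose g0 hg0 using hstage
  set m := hS.toFinset.sup g0 with hmdef
  have hmS : ∀ Q ∈ S, ∀ x : E.obj Q, α.app Q x ∈ rng m Q := fun Q hQ x =>
    hmono _ _ (Finset.le_sup (hS.mem_toFinset.mpr hQ)) Q (hg0 Q x)
  -- extend to all objects via biproduct decompositions
  have hall : ∀ (Q : D) (x : E.obj Q), α.app Q x ∈ rng m Q := by
    intro Q x
    obtain ⟨n, g, hgS, hbi, ⟨e⟩⟩ := hgen Q
    haveI := hbi
    have hB : ∀ z : E.obj (⨁ g), α.app (⨁ g) z ∈ rng m (⨁ g) := by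
      intro z
      have htot : (𝟙 (⨁ g) : ⨁ g ⟶ ⨁ g) =
          ∑ k : Fin n, biproduct.π g k ≫ biproduct.ι g k := biproduct.total.symm
      have h1 : z = ∑ k : Fin n, (E.map (biproduct.π g k ≫ biproduct.ι g k)) z := by
        conv_lhs => rw [show z = E.map (𝟙 (⨁ g)) z by simp]
        rw [htot, E.map_sum]
        exact (congrArg (fun φ => φ z) (map_sum AddCommGrpCat.homAddEquiv
          (fun k : Fin n => E.map (biproduct.π g k ≫ biproduct.ι g k)) Finset.univ)).trans
          (AddMonoidHom.finset_sum_apply _ _ z)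
      rw [h1, map_sum]
      refine AddSubgroup.sum_mem _ fun k _ => ?_
      have h2 : (E.map (biproduct.π g k ≫ biproduct.ι g k)) z =
          E.map (biproduct.ι g k) (E.map (biproduct.π g k) z) := by
        rw [E.map_comp]; rfl
      rw [h2]
      rw [NatTrans.naturality_apply α (biproduct.ι g k)]
      exact hmap m _ _ (hmS (g k) (hgS k) _)
    have h3 : x = E.map e.inv (E.map e.hom x) := by
      rw [show E.map e.inv (E.map e.hom x) = E.map (e.hom ≫ e.inv) x by rw [E.map_comp]; rfl]
      simp
    rw [h3]
    rw [NatTrans.naturality_apply α e.inv]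
    exact hmap m _ _ (hB _)
  -- construct the lift
  have hex : ∀ (Q : D) (x : E.obj Q), ∃ y : (H m).obj Q,
      ((c.ι.app m).app Q) y = α.app Q x := fun Q x => hall Q x
  let f : ∀ Q : D, E.obj Q →+ (H m).obj Q := fun Q =>
    { toFun := fun x => (hex Q x).choose
      map_zero' := hLinj m Q (by
        rw [(hex Q 0).choose_spec, map_zero]; exact (map_zero _).symm)
      map_add' := fun x y => hLinj m Q (by
        rw [(hex Q (x + y)).choose_spec, map_add]
        exact (congrArg₂ (· + ·) (hex Q x).choose_spec (hex Q y).choose_spec).symm.trans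
          (map_add _ _ _).symm) }
  have hfspec : ∀ (Q : D) (x : E.obj Q), ((c.ι.app m).app Q) (f Q x) = α.app Q x :=
    fun Q x => (hex Q x).choose_spec
  refine ⟨m, { app := fun Q => AddCommGrpCat.ofHom (f Q), naturality := ?_ }, ?_⟩
  · intro Q Q' φ
    ext x
    apply hLinj m Q'
    show ((c.ι.app m).app Q') (f Q' (E.map φ x)) = ((c.ι.app m).app Q') ((H m).map φ (f Q x))
    rw [hfspec Q' (E.map φ x)]
    have h4 : α.app Q' (E.map φ x) = c.pt.map φ (α.app Q x) :=
      NatTrans.naturality_apply α φ x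
    have h5 : ((c.ι.app m).app Q') ((H m).map φ (f Q x)) =
        c.pt.map φ (((c.ι.app m).app Q) (f Q x)) :=
      NatTrans.naturality_apply (c.ι.app m) φ (f Q x)
    rw [h4, h5, hfspec Q x]
  · ext Q x
    exact (hfspec Q x).symm
end

section
/- Let ℤ[1/4] denote the additive subgroup of ℚ consisting of all rationals of the form a / 4^n with a ∈ ℤ and n ∈ ℕ. Consider System A, the ℕ-indexed directed system of abelian groups with A_n = ℤ ⊕ ℤ for every n and every transition map A_n → A_{n+1} equal to (x, y) ↦ (2x + 2y, 2x + 2y). Then the assignment sending the class in the direct limit of an element (x, y) ∈ A_n to (x + y) / (2 · 4^n) ∈ ℚ is a well-defined group isomorphism from the direct limit of System A onto ℤ[1/4]. -/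
/-!
System A is the ℕ-indexed directed system of abelian groups with `A_n = ℤ ⊕ ℤ` for every `n`
and every transition map `A_n → A_(n+1)` given by `(x, y) ↦ (2x + 2y, 2x + 2y)`.
We formalize its direct limit via `AddCommGroup.DirectLimit`, where the transition map from
level `i` to level `j` (for `i ≤ j`) is the `(j - i)`-fold iterate of the step map.
`ℤ[1/4]` is realized as the set of rationals of the form `a / 4 ^ n`.
-/

/-- The step map of System A: `(x, y) ↦ (2x + 2y, 2x + 2y)`. -/
def stepA : (ℤ × ℤ) →+ (ℤ × ℤ) where
  toFun p := (2 * p.1 + 2 * p.2, 2 * p.1 + 2 * p.2)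
  map_zero' := by simp
  map_add' p q := by
    simp only [Prod.fst_add, Prod.snd_add, Prod.mk_add_mk, Prod.mk.injEq]
    constructor <;> ring

/-- `stepA` viewed as an additive monoid endomorphism, so that it can be iterated. -/
def stepAEnd : AddMonoid.End (ℤ × ℤ) := stepA

/-- System A: the transition map from level `i` to level `j` is the `(j-i)`-fold
iterate of `stepA`. -/
def sysA : ∀ i j : ℕ, i ≤ j → (ℤ × ℤ) →+ (ℤ × ℤ) :=
  fun i j _ => stepAEnd ^ (j - i)

lemma stepA_pow_sum (k : ℕ) (x : ℤ × ℤ) :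
    ((stepAEnd ^ k) x).1 + ((stepAEnd ^ k) x).2 = 4 ^ k * (x.1 + x.2) := by
  induction k with
  | zero => simp
  | succ k ih =>
    rw [pow_succ']
    show (stepAEnd ((stepAEnd ^ k) x)).1 + (stepAEnd ((stepAEnd ^ k) x)).2 = _
    set y := (stepAEnd ^ k) x with hy
    have hs : stepAEnd y = (2 * y.1 + 2 * y.2, 2 * y.1 + 2 * y.2) := rfl
    rw [hs, pow_succ]
    simp only
    nlinarith [ih]

instance : DirectedSystem (fun _ : ℕ => ℤ × ℤ) (fun i j h => sysA i j h) where
  map_self i x := by simp only [sysA, Nat.sub_self, pow_zero]; rfl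
  map_map {i j k} hij hjk x := by
    simp only [sysA]
    have h : (i - j) + (j - k) = i - k := by omega
    rw [← h, pow_add]
    rfl

/-- The assignment sending the class of `(x, y) ∈ A_n` in the direct limit of System A to
`(x + y) / (2 · 4 ^ n)` is a well-defined group homomorphism which is an isomorphism onto
the subgroup `ℤ[1/4] = {a / 4 ^ n : a ∈ ℤ, n ∈ ℕ} ⊆ ℚ`. -/
theorem directLimit_sysA_iso_zOneFourth :
    ∃ φ : AddCommGroup.DirectLimit (fun _ : ℕ => ℤ × ℤ) sysA →+ ℚ,
      (∀ (n : ℕ) (x : ℤ × ℤ),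
        φ (AddCommGroup.DirectLimit.of (fun _ : ℕ => ℤ × ℤ) sysA n x)
          = ((x.1 : ℚ) + (x.2 : ℚ)) / (2 * 4 ^ n)) ∧
      Function.Injective φ ∧
      Set.range φ = {q : ℚ | ∃ (a : ℤ) (n : ℕ), q = (a : ℚ) / 4 ^ n} := by
  set g : ∀ n : ℕ, (ℤ × ℤ) →+ ℚ := fun n =>
    { toFun := fun x => ((x.1 : ℚ) + (x.2 : ℚ)) / (2 * 4 ^ n)
      map_zero' := by simp
      map_add' := fun a b => by simp only [Prod.fst_add, Prod.snd_add]; push_cast; ring } with hg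
  have Hg : ∀ i j hij x, g j (sysA i j hij x) = g i x := by
    intro i j hij x
    simp only [hg, AddMonoidHom.coe_mk, ZeroHom.coe_mk, sysA]
    have h := stepA_pow_sum (j - i) x
    have h4 : (((stepAEnd ^ (j - i)) x).1 : ℚ) + (((stepAEnd ^ (j - i)) x).2 : ℚ)
        = 4 ^ (j - i) * ((x.1 : ℚ) + x.2) := by exact_mod_cast congrArg (Int.cast : ℤ → ℚ) h
    change ((((stepAEnd ^ (j - i)) x).1 : ℚ) + (((stepAEnd ^ (j - i)) x).2 : ℚ)) / (2 * 4 ^ j) = _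
    rw [h4]
    have hj : (4 : ℚ) ^ j = 4 ^ (j - i) * 4 ^ i := by
      rw [← pow_add]; congr 1; omega
    rw [hj]
    field_simp
  refine ⟨AddCommGroup.DirectLimit.lift _ _ _ g Hg, fun n x => ?_, ?_, ?_⟩
  · rw [AddCommGroup.DirectLimit.lift_of]; rfl
  · rw [injective_iff_map_eq_zero]
    intro z hz
    induction z using AddCommGroup.DirectLimit.induction_on with
    | ih n x =>
      rw [AddCommGroup.DirectLimit.lift_of] at hz
      simp only [hg, AddMonoidHom.coe_mk, ZeroHom.coe_mk, div_eq_zero_iff] at hz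
      have hsum : x.1 + x.2 = 0 := by
        rcases hz with h | h
        · exact_mod_cast h
        · exfalso; revert h; positivity
      have hx0 : sysA n (n + 1) (Nat.le_succ n) x = 0 := by
        simp only [sysA, show n + 1 - n = 1 from by omega, pow_one]
        show stepA x = 0
        simp only [stepA, AddMonoidHom.coe_mk, ZeroHom.coe_mk]
        have : (2 * x.1 + 2 * x.2 : ℤ) = 0 := by linarith
        simp [this, Prod.ext_iff]
      calc AddCommGroup.DirectLimit.of (fun _ : ℕ => ℤ × ℤ) sysA n x
          = AddCommGroup.DirectLimit.of (fun _ : ℕ => ℤ × ℤ) sysA (n + 1)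
              (sysA n (n + 1) (Nat.le_succ n) x) :=
            (AddCommGroup.DirectLimit.of_f _ _).symm
        _ = 0 := by rw [hx0, map_zero]
  · ext q
    simp only [Set.mem_range, Set.mem_setOf_eq]
    constructor
    · rintro ⟨z, rfl⟩
      induction z using AddCommGroup.DirectLimit.induction_on with
      | ih n x =>
        refine ⟨2 * (x.1 + x.2), n + 1, ?_⟩
        rw [AddCommGroup.DirectLimit.lift_of]
        simp only [hg, AddMonoidHom.coe_mk, ZeroHom.coe_mk]
        push_cast
        rw [pow_succ]
        field_simp
        ring
    · rintro ⟨a, n, rfl⟩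
      refine ⟨AddCommGroup.DirectLimit.of (fun _ : ℕ => ℤ × ℤ) sysA n (a, a), ?_⟩
      rw [AddCommGroup.DirectLimit.lift_of]
      simp only [hg, AddMonoidHom.coe_mk, ZeroHom.coe_mk]
      field_simp
      ring
end

section
/- Let ℤ[1/4] denote the additive subgroup of ℚ consisting of all rationals of the form a / 4^n with a ∈ ℤ and n ∈ ℕ. Consider System A (A_n = ℤ ⊕ ℤ with every transition map (x, y) ↦ (2x + 2y, 2x + 2y)) and System B (B_n = ℤ⁴ with every transition map (x, y, z, w) ↦ (s, s, s, s), s = x + y + z + w). The levelwise maps L_n : A_n → B_n, (x, y) ↦ (x, y, x, y), commute with the transition maps of the two systems, and hence induce a group homomorphism L : colim A_n → colim B_n on the direct limits. Under the isomorphism φ : colim A_n ≅ ℤ[1/4] (class of (x, y) ∈ A_n ↦ (x + y) / (2 · 4^n)) and the isomorphism ψ : colim B_n ≅ ℤ[1/4] (class of (x, y, z, w) ∈ B_n ↦ (x + y + z + w) / 4^{n+1}), the induced map L corresponds to the identity map of ℤ[1/4]; that is, ψ ∘ L = φ. -/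
/-- The step map of System B: `(x, y, z, w) ↦ (s, s, s, s)` where `s = x + y + z + w`. -/
def stepB : (ℤ × ℤ × ℤ × ℤ) →+ (ℤ × ℤ × ℤ × ℤ) where
  toFun p := (p.1 + p.2.1 + p.2.2.1 + p.2.2.2, p.1 + p.2.1 + p.2.2.1 + p.2.2.2,
    p.1 + p.2.1 + p.2.2.1 + p.2.2.2, p.1 + p.2.1 + p.2.2.1 + p.2.2.2)
  map_zero' := by simp
  map_add' p q := by
    simp only [Prod.fst_add, Prod.snd_add, Prod.mk_add_mk, Prod.mk.injEq]
    refine ⟨?_, ?_, ?_, ?_⟩ <;> ring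

/-- `stepB` viewed as an additive monoid endomorphism, so that it can be iterated. -/
def stepBEnd : AddMonoid.End (ℤ × ℤ × ℤ × ℤ) := stepB

/-- System B: the transition map from level `i` to level `j` is the `(j-i)`-fold
iterate of `stepB`. -/
def sysB : ∀ i j : ℕ, i ≤ j → (ℤ × ℤ × ℤ × ℤ) →+ (ℤ × ℤ × ℤ × ℤ) :=
  fun i j _ => stepBEnd ^ (j - i)

/-- The levelwise map `L_n : A_n → B_n`, `(x, y) ↦ (x, y, x, y)`. -/
def LmapAB : (ℤ × ℤ) →+ (ℤ × ℤ × ℤ × ℤ) where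
  toFun p := (p.1, p.2, p.1, p.2)
  map_zero' := by simp
  map_add' p q := by
    simp only [Prod.fst_add, Prod.snd_add, Prod.mk_add_mk, Prod.mk.injEq]

lemma comm_step (x : ℤ × ℤ) : stepB (LmapAB x) = LmapAB (stepA x) := by
  simp [stepA, stepB, LmapAB]; ring

lemma comm_iter (k : ℕ) : ∀ x : ℤ × ℤ,
    (stepBEnd ^ k) (LmapAB x) = LmapAB ((stepAEnd ^ k) x) := by
  induction k with
  | zero => intro x; simp
  | succ n ih =>
    intro x
    rw [pow_succ, pow_succ]
    show (stepBEnd ^ n) (stepB (LmapAB x)) = LmapAB ((stepAEnd ^ n) (stepA x))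
    rw [comm_step, ih (stepA x)]

/-- The levelwise maps `(x, y) ↦ (x, y, x, y)` commute with the transition maps of
Systems A and B, hence induce a group homomorphism `L` on the direct limits; under the
isomorphisms `φ : colim A_n ≅ ℤ[1/4]` and `ψ : colim B_n ≅ ℤ[1/4]`, the induced map `L`
corresponds to the identity of `ℤ[1/4]`, i.e. `ψ ∘ L = φ`. -/
theorem inducedMap_LmapAB_corresponds_to_id :
    (∀ x : ℤ × ℤ, stepB (LmapAB x) = LmapAB (stepA x)) ∧
    ∃ L : AddCommGroup.DirectLimit (fun _ : ℕ => ℤ × ℤ) sysA →+ AddCommGroup.DirectLimit (fun _ : ℕ => ℤ × ℤ × ℤ × ℤ) sysB,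
      (∀ (n : ℕ) (x : ℤ × ℤ), L (AddCommGroup.DirectLimit.of (fun _ : ℕ => ℤ × ℤ) sysA n x) = AddCommGroup.DirectLimit.of (fun _ : ℕ => ℤ × ℤ × ℤ × ℤ) sysB n (LmapAB x)) ∧
      ∀ (φ : AddCommGroup.DirectLimit (fun _ : ℕ => ℤ × ℤ) sysA →+ ℚ) (ψ : AddCommGroup.DirectLimit (fun _ : ℕ => ℤ × ℤ × ℤ × ℤ) sysB →+ ℚ),
        (∀ (n : ℕ) (x : ℤ × ℤ), φ (AddCommGroup.DirectLimit.of (fun _ : ℕ => ℤ × ℤ) sysA n x) = ((x.1 : ℚ) + (x.2 : ℚ)) / (2 * 4 ^ n)) →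
        (∀ (n : ℕ) (x : ℤ × ℤ × ℤ × ℤ), ψ (AddCommGroup.DirectLimit.of (fun _ : ℕ => ℤ × ℤ × ℤ × ℤ) sysB n x) = ((x.1 : ℚ) + (x.2.1 : ℚ) + (x.2.2.1 : ℚ) + (x.2.2.2 : ℚ)) / 4 ^ (n + 1)) →
        ∀ a, ψ (L a) = φ a := by
  refine ⟨comm_step, ?_⟩
  refine ⟨AddCommGroup.DirectLimit.lift _ sysA _
      (fun n => (AddCommGroup.DirectLimit.of (fun _ : ℕ => ℤ × ℤ × ℤ × ℤ) sysB n).comp LmapAB)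
      ?_, ?_, ?_⟩
  · intro i j hij x
    simp only [AddMonoidHom.comp_apply]
    rw [show sysA i j hij x = (stepAEnd ^ (j - i)) x from rfl, ← comm_iter,
      show ((stepBEnd ^ (j - i)) (LmapAB x)) = sysB i j hij (LmapAB x) from rfl,
      AddCommGroup.DirectLimit.of_f]
  · intro n x
    rw [AddCommGroup.DirectLimit.lift_of]
    rfl
  · intro φ ψ hφ hψ a
    refine AddCommGroup.DirectLimit.induction_on a ?_
    intro n x
    rw [AddCommGroup.DirectLimit.lift_of]
    simp only [AddMonoidHom.comp_apply, hψ, hφ, LmapAB]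
    show ((x.1:ℚ) + x.2 + x.1 + x.2) / 4 ^ (n+1) = _
    rw [pow_succ]
    ring
end

section
/- Let ℤ[1/4] denote the additive subgroup of ℚ consisting of all rationals of the form a / 4^n with a ∈ ℤ and n ∈ ℕ. Consider System B (B_n = ℤ⁴ with every transition map (x, y, z, w) ↦ (s, s, s, s), s = x + y + z + w) and System A (A_n = ℤ ⊕ ℤ with every transition map (x, y) ↦ (2x + 2y, 2x + 2y)). The levelwise maps K_n : B_n → A_n, (x, y, z, w) ↦ (x + z, y + w), commute with the transition maps of the two systems, and hence induce a group homomorphism K : colim B_n → colim A_n on the direct limits. Under the isomorphism ψ : colim B_n ≅ ℤ[1/4] (class of (x, y, z, w) ∈ B_n ↦ (x + y + z + w) / 4^{n+1}) and the isomorphism φ : colim A_n ≅ ℤ[1/4] (class of (x, y) ∈ A_n ↦ (x + y) / (2 · 4^n)), the induced map K corresponds to multiplication by 2 on ℤ[1/4]; that is, φ ∘ K = 2 · ψ. -/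
/-- The levelwise map `K_n : B_n → A_n`, `(x, y, z, w) ↦ (x + z, y + w)`. -/
def KmapBA : (ℤ × ℤ × ℤ × ℤ) →+ (ℤ × ℤ) where
  toFun p := (p.1 + p.2.2.1, p.2.1 + p.2.2.2)
  map_zero' := by simp
  map_add' p q := by
    simp only [Prod.fst_add, Prod.snd_add, Prod.mk_add_mk, Prod.mk.injEq]
    constructor <;> ring

lemma step_comm (x : ℤ × ℤ × ℤ × ℤ) : stepA (KmapBA x) = KmapBA (stepB x) := by
  simp only [stepA, stepB, KmapBA, AddMonoidHom.coe_mk, ZeroHom.coe_mk, Prod.mk.injEq]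
  constructor <;> ring

lemma pow_comm (k : ℕ) (x : ℤ × ℤ × ℤ × ℤ) :
    KmapBA ((stepBEnd ^ k) x) = (stepAEnd ^ k) (KmapBA x) := by
  induction k generalizing x with
  | zero => simp
  | succ n ih =>
    rw [pow_succ, pow_succ]
    show KmapBA ((stepBEnd ^ n) (stepBEnd x)) = (stepAEnd ^ n) (stepAEnd (KmapBA x))
    rw [ih]
    exact congrArg _ (step_comm x).symm

/-- The levelwise maps `(x, y, z, w) ↦ (x + z, y + w)` commute with the transition maps of
Systems B and A, hence induce a group homomorphism `K` on the direct limits; under the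
isomorphisms `ψ : colim B_n ≅ ℤ[1/4]` and `φ : colim A_n ≅ ℤ[1/4]`, the induced map `K`
corresponds to multiplication by `2` on `ℤ[1/4]`, i.e. `φ ∘ K = 2 · ψ`. -/
theorem inducedMap_KmapBA_corresponds_to_two :
    (∀ x : ℤ × ℤ × ℤ × ℤ, stepA (KmapBA x) = KmapBA (stepB x)) ∧
    ∃ K : AddCommGroup.DirectLimit (fun _ : ℕ => ℤ × ℤ × ℤ × ℤ) sysB →+ AddCommGroup.DirectLimit (fun _ : ℕ => ℤ × ℤ) sysA,
      (∀ (n : ℕ) (x : ℤ × ℤ × ℤ × ℤ), K (AddCommGroup.DirectLimit.of (fun _ : ℕ => ℤ × ℤ × ℤ × ℤ) sysB n x) = AddCommGroup.DirectLimit.of (fun _ : ℕ => ℤ × ℤ) sysA n (KmapBA x)) ∧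
      ∀ (ψ : AddCommGroup.DirectLimit (fun _ : ℕ => ℤ × ℤ × ℤ × ℤ) sysB →+ ℚ) (φ : AddCommGroup.DirectLimit (fun _ : ℕ => ℤ × ℤ) sysA →+ ℚ),
        (∀ (n : ℕ) (x : ℤ × ℤ × ℤ × ℤ), ψ (AddCommGroup.DirectLimit.of (fun _ : ℕ => ℤ × ℤ × ℤ × ℤ) sysB n x) = ((x.1 : ℚ) + (x.2.1 : ℚ) + (x.2.2.1 : ℚ) + (x.2.2.2 : ℚ)) / 4 ^ (n + 1)) →
        (∀ (n : ℕ) (x : ℤ × ℤ), φ (AddCommGroup.DirectLimit.of (fun _ : ℕ => ℤ × ℤ) sysA n x) = ((x.1 : ℚ) + (x.2 : ℚ)) / (2 * 4 ^ n)) →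
        ∀ a, φ (K a) = 2 * ψ a := by
  refine ⟨step_comm, ?_⟩
  have Hg : ∀ (i j : ℕ) (hij : i ≤ j) (x : ℤ × ℤ × ℤ × ℤ),
      ((AddCommGroup.DirectLimit.of (fun _ : ℕ => ℤ × ℤ) sysA j).comp KmapBA) (sysB i j hij x)
        = ((AddCommGroup.DirectLimit.of (fun _ : ℕ => ℤ × ℤ) sysA i).comp KmapBA) x := by
    intro i j hij x
    simp only [AddMonoidHom.comp_apply]
    rw [show sysB i j hij x = (stepBEnd ^ (j - i)) x from rfl, pow_comm]
    exact AddCommGroup.DirectLimit.of_f (f := sysA) hij (KmapBA x)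
  refine ⟨AddCommGroup.DirectLimit.lift _ sysB _
    (fun n => (AddCommGroup.DirectLimit.of (fun _ : ℕ => ℤ × ℤ) sysA n).comp KmapBA)
    Hg, fun n x => AddCommGroup.DirectLimit.lift_of _ _ Hg n x, ?_⟩
  · intro ψ φ hψ hφ a
    induction a using AddCommGroup.DirectLimit.induction_on with
    | ih n x =>
      rw [AddCommGroup.DirectLimit.lift_of, hψ, AddMonoidHom.comp_apply, hφ]
      simp only [KmapBA, AddMonoidHom.coe_mk, ZeroHom.coe_mk]
      push_cast
      field_simp
      ring
end
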